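/- Let $K$ be a field of characteristic zero, let $d > m \geq 1$ with $\gcd(m,d)=1$, and let $A, B, C \in K$ with $A, B \neq 0$. Let $g(x) = Ax^d + Bx^m + C$, let $\eta$ be a $(d-m)$-th root of $-mB/(dA)$ in an algebraic closure, and let $\zeta$ be a primitive $(d-m)$-th root of unity. Then $\prod_{j=1}^{d-m} g(\zeta^j \eta) = d^{-d} A^{-m}\left[ d^d A^m C^{d-m} + (-1)^{d-1}(d-m)^{d-m} m^m B^d \right]$. -/

import Mathlib

private lemma prod_sub_pow_root {R : Type*} [CommRing R] [IsDomain R] {n : ℕ} (hn : 0 < n)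
    {ξ : R} (hξ : IsPrimitiveRoot ξ n) (x : R) :
    ∏ j ∈ Finset.range n, (x - ξ ^ j) = x ^ n - 1 := by
  have : NeZero n := ⟨hn.ne'⟩
  have h := congrArg (Polynomial.eval x) (Polynomial.X_pow_sub_one_eq_prod hn hξ)
  simp only [Polynomial.eval_sub, Polynomial.eval_pow, Polynomial.eval_X, Polynomial.eval_one,
    Polynomial.eval_prod, Polynomial.eval_C] at h
  rw [h]
  refine Finset.prod_bij (fun j _ => ξ ^ j) ?_ ?_ ?_ ?_
  · intro j hj
    exact (Polynomial.mem_nthRootsFinset hn 1).2 (by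
      rw [← pow_mul, mul_comm, pow_mul, hξ.pow_eq_one, one_pow])
  · intro i hi j hj hij
    exact hξ.pow_inj (Finset.mem_range.1 hi) (Finset.mem_range.1 hj) hij
  · intro μ hμ
    obtain ⟨i, hi, rfl⟩ := hξ.eq_pow_of_pow_eq_one ((Polynomial.mem_nthRootsFinset hn 1).1 hμ)
    exact ⟨i, Finset.mem_range.2 hi, rfl⟩
  · intro j hj; rfl

private lemma key_prod {R : Type*} [Field R] {n : ℕ} (hn : 0 < n)
    {ξ : R} (hξ : IsPrimitiveRoot ξ n) (c a : R) (ha : a ≠ 0) :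
    ∏ j ∈ Finset.Icc 1 n, (c + a * ξ ^ j) = c ^ n - (-a) ^ n := by
  have hξn : ∀ j : ℕ, ξ ^ (j % n) = ξ ^ j := by
    intro j
    conv_rhs => rw [← Nat.div_add_mod j n, pow_add, pow_mul, hξ.pow_eq_one, one_pow, one_mul]
  have h1 : ∏ j ∈ Finset.Icc 1 n, (c + a * ξ ^ j)
      = ∏ j ∈ Finset.range n, (c + a * ξ ^ j) := by
    refine Finset.prod_nbij' (fun j => j % n) (fun j => if j = 0 then n else j) ?_ ?_ ?_ ?_ ?_
    · intro j _; exact Finset.mem_range.2 (Nat.mod_lt _ hn)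
    · intro j hj
      simp only [Finset.mem_range] at hj
      rcases eq_or_ne j 0 with rfl | h
      · simp [Finset.mem_Icc]; omega
      · simp only [if_neg h, Finset.mem_Icc]
        omega
    · intro j hj
      simp only [Finset.mem_Icc] at hj
      rcases eq_or_ne (j % n) 0 with h | h
      · rw [h, if_pos rfl]
        exact (Nat.le_antisymm hj.2 (Nat.le_of_dvd (by omega) (Nat.dvd_of_mod_eq_zero h))).symm
      · rw [if_neg h]
        exact Nat.mod_eq_of_lt (lt_of_le_of_ne hj.2 (fun e => h (by rw [e, Nat.mod_self])))
    · intro j hj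
      simp only [Finset.mem_range] at hj
      rcases eq_or_ne j 0 with rfl | h
      · simp [Nat.mod_self]
      · rw [if_neg h, Nat.mod_eq_of_lt hj]
    · intro j _
      rw [hξn]
  rw [h1]
  have h2 : ∀ j, c + a * ξ ^ j = -a * (-c / a - ξ ^ j) := by
    intro j; field_simp; ring
  simp only [h2]
  rw [Finset.prod_mul_distrib, Finset.prod_const, Finset.card_range,
    prod_sub_pow_root hn hξ, mul_sub, ← mul_pow]
  field_simp

/-- Product of `g(x) = Ax^d + Bx^m + C` over its nonzero critical points `ζ^j η`:
`∏_{j=1}^{d-m} g(ζ^j η) = d^{-d} A^{-m} [d^d A^m C^{d-m} + (-1)^{d-1}(d-m)^{d-m} m^m B^d]`. -/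
theorem stmt5 (F : Type*) [Field F] [CharZero F] (d m : ℕ)
    (hm : 1 ≤ m) (hmd : m < d) (hcop : Nat.gcd m d = 1)
    (A B C η ζ : F) (hA : A ≠ 0) (hB : B ≠ 0)
    (hη : η ^ (d - m) = -((m : F) * B) / ((d : F) * A))
    (hζ : IsPrimitiveRoot ζ (d - m)) :
    ∏ j ∈ Finset.Icc 1 (d - m),
        (A * (ζ ^ j * η) ^ d + B * (ζ ^ j * η) ^ m + C) =
      ((d : F) ^ d)⁻¹ * (A ^ m)⁻¹ *
        ((d : F) ^ d * A ^ m * C ^ (d - m) +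
          (-1) ^ (d - 1) * ((d - m : ℕ) : F) ^ (d - m) * (m : F) ^ m * B ^ d) := by
  set n := d - m with hn_def
  have hn : 0 < n := by omega
  have hdmn : d = m + n := by omega
  have hdF : (d : F) ≠ 0 := Nat.cast_ne_zero.2 (by omega)
  have hmF : (m : F) ≠ 0 := Nat.cast_ne_zero.2 (by omega)
  have hnF : (n : F) ≠ 0 := Nat.cast_ne_zero.2 hn.ne'
  have hηn : η ^ n ≠ 0 := by
    rw [hη]
    exact div_ne_zero (neg_ne_zero.2 (mul_ne_zero hmF hB)) (mul_ne_zero hdF hA)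
  have hηne : η ≠ 0 := fun h => hηn (by rw [h, zero_pow hn.ne'])
  have hcop' : Nat.Coprime m n := (Nat.coprime_sub_self_right hmd.le).2 hcop
  have hξ : IsPrimitiveRoot (ζ ^ m) n := hζ.pow_of_coprime m hcop'
  set a : F := (n : F) / (d : F) * B * η ^ m with ha_def
  have ha : a ≠ 0 := mul_ne_zero (mul_ne_zero (div_ne_zero hnF hdF) hB) (pow_ne_zero m hηne)
  have hterm : ∀ j ∈ Finset.Icc 1 n,
      A * (ζ ^ j * η) ^ d + B * (ζ ^ j * η) ^ m + C = C + a * (ζ ^ m) ^ j := by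
    intro j _
    have hzj : (ζ ^ j) ^ n = 1 := by
      rw [← pow_mul, mul_comm, pow_mul, hζ.pow_eq_one, one_pow]
    have e1 : (ζ ^ j * η) ^ d = (ζ ^ j * η) ^ m * η ^ n := by
      rw [hdmn, pow_add, mul_pow (ζ ^ j) η n, hzj, one_mul]
    rw [e1, hη]
    have e2 : (ζ ^ j * η) ^ m = (ζ ^ m) ^ j * η ^ m := by
      rw [mul_pow, ← pow_mul, ← pow_mul, mul_comm j m]
    rw [e2, ha_def]
    have hdm : (d : F) - (m : F) = (n : F) := by
      rw [hn_def]; push_cast [hmd.le]; ring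
    field_simp
    rw [← hdm]
    ring
  rw [Finset.prod_congr rfl hterm, key_prod hn hξ C a ha]
  have hna : (-a) ^ n = (-1) ^ d * ((n : F) ^ n * (m : F) ^ m * B ^ d) / ((d : F) ^ d * A ^ m) := by
    have hmn : η ^ (m * n) = (-1) ^ m * ((m : F) ^ m * B ^ m) / ((d : F) ^ m * A ^ m) := by
      rw [mul_comm m n, pow_mul, hη, div_pow, neg_pow, mul_pow, mul_pow]
    rw [neg_pow, ha_def, mul_pow, mul_pow, div_pow, ← pow_mul, hmn]
    rw [hdmn]
    field_simp
    ring
  rw [hna]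
  have hd1 : (-1 : F) ^ d = -(-1) ^ (d - 1) := by
    have : d = (d - 1) + 1 := by omega
    rw [this]; simp [pow_succ]
  rw [hd1]
  field_simp
  ring
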